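/- The involute N has at most as many cusps as M: between any two consecutive zeros of β (cusps of N) there is at least one sign change of β' (cusp of M). -/
import Mathlib


open Real

/-- Between any two consecutive zeros of β (cusps of the involute N) there is
at least one sign change of β' (a cusp of M); hence N has at most as many cusps
as M. -/
theorem sign_change_between_zeros (β β' : ℝ → ℝ)
    (hβ : ∀ θ, HasDerivAt β (β' θ) θ)
    (hβcont : Continuous β')
    (hanti : ∀ θ, β (θ + π) = -β θ)
    (θ₁ θ₂ : ℝ) (hlt : θ₁ < θ₂)
    (h₁ : β θ₁ = 0) (h₂ : β θ₂ = 0)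
    (hconsec : ∀ θ ∈ Set.Ioo θ₁ θ₂, β θ ≠ 0) :
    ∃ a ∈ Set.Ioo θ₁ θ₂, ∃ b ∈ Set.Ioo θ₁ θ₂, β' a * β' b < 0 := by
  set m := (θ₁ + θ₂) / 2 with hm
  have h1m : θ₁ < m := by simp [hm]; linarith
  have hm2 : m < θ₂ := by simp [hm]; linarith
  have hβc : Continuous β := continuous_iff_continuousAt.mpr fun x => (hβ x).continuousAt
  obtain ⟨a, ha, hfa⟩ := exists_hasDerivAt_eq_slope β β' h1m
    (hβc.continuousOn) (fun x _ => hβ x)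
  obtain ⟨b, hb, hfb⟩ := exists_hasDerivAt_eq_slope β β' hm2
    (hβc.continuousOn) (fun x _ => hβ x)
  have hmne : β m ≠ 0 := hconsec m ⟨h1m, hm2⟩
  refine ⟨a, ⟨ha.1, ha.2.trans hm2⟩, b, ⟨h1m.trans hb.1, hb.2⟩, ?_⟩
  rw [hfa, hfb, h₁, h₂]
  have h1 : (0:ℝ) < m - θ₁ := by linarith
  have h2 : (0:ℝ) < θ₂ - m := by linarith
  rcases hmne.lt_or_gt with h | h
  · exact mul_neg_of_neg_of_pos (div_neg_of_neg_of_pos (by linarith) h1)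
      (div_pos (by linarith) h2)
  · have ha' : (β m - 0) / (m - θ₁) > 0 := div_pos (by linarith) h1
    have hb' : (0 - β m) / (θ₂ - m) < 0 := div_neg_of_neg_of_pos (by linarith) h2
    exact mul_neg_of_pos_of_neg ha' hb'
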